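/- Let X be a set and K : X × X → ℂ a bounded function satisfying condition (A1). Assume that for every n, all pairwise distinct x₁, …, xₙ ∈ X, every y ∈ ℂⁿ, and every c ∈ ℓ¹(X) with Φ(c)(x_i) = y_i for all i, one has ‖c‖_{ℓ¹(X)} ≥ ‖(K[x])^{-1} y‖₁. Then for every n, all pairwise distinct x₁, …, xₙ ∈ X, every continuous V : ℂⁿ → [0,∞), every continuous nondecreasing φ : [0,∞) → [0,∞) with lim_{t→∞} φ(t) = ∞, and every μ > 0, there exists c₀ ∈ ℓ¹(X) with support contained in {x₁, …, xₙ} such that V(Φ(c₀)(x₁), …, Φ(c₀)(xₙ)) + μ φ(‖c₀‖_{ℓ¹(X)}) ≤ V(Φ(c)(x₁), …, Φ(c)(xₙ)) + μ φ(‖c‖_{ℓ¹(X)}) for every c ∈ ℓ¹(X). -/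

import Mathlib

open Matrix Filter Topology

/-- The kernel matrix `K[x]`, with `(j,k)` entry `K(x_k, x_j)`. -/
noncomputable def kernelMatrix {X : Type*} (K : X → X → ℂ) {n : ℕ} (x : Fin n → X) :
    Matrix (Fin n) (Fin n) ℂ := Matrix.of fun j k => K (x k) (x j)

/-- The `ℓ¹` norm of a vector in `ℂⁿ`. -/
noncomputable def l1norm {n : ℕ} (v : Fin n → ℂ) : ℝ := ∑ j, ‖v j‖

/-- Condition (A1): every kernel matrix at finitely many pairwise distinct points is
nonsingular. -/
def CondA1 {X : Type*} (K : X → X → ℂ) : Prop :=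
  ∀ (n : ℕ) (x : Fin n → X), Function.Injective x → IsUnit (kernelMatrix K x).det

/-- `Φ(c)(x) = ∑_{t ∈ X} c_t K(t, x)` for `c ∈ ℓ¹(X)`. -/
noncomputable def PhiMap {X : Type*} (K : X → X → ℂ) (c : X → ℂ) (x : X) : ℂ :=
  ∑' t, c t * K t x

lemma continuous_l1norm {n : ℕ} : Continuous (l1norm (n := n)) := by
  unfold l1norm
  exact continuous_finset_sum _ fun j _ => continuous_norm.comp (continuous_apply j)

lemma continuous_mulVec' {n : ℕ} (A : Matrix (Fin n) (Fin n) ℂ) :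
    Continuous (fun v : Fin n → ℂ => A *ᵥ v) := by
  apply continuous_pi
  intro j
  simp only [Matrix.mulVec, dotProduct]
  exact continuous_finset_sum _ fun k _ => continuous_const.mul (continuous_apply k)

theorem stmt_7 {X : Type*} (K : X → X → ℂ) (M : ℝ)
    (hK : ∀ s t, ‖K s t‖ ≤ M) (hA1 : CondA1 K)
    (hmni : ∀ (n : ℕ) (x : Fin n → X), Function.Injective x → ∀ y : Fin n → ℂ,
      ∀ c : X → ℂ, Summable (fun t => ‖c t‖) →
        (∀ i, PhiMap K c (x i) = y i) →
        l1norm ((kernelMatrix K x)⁻¹ *ᵥ y) ≤ ∑' t, ‖c t‖) :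
    ∀ (n : ℕ) (x : Fin n → X), Function.Injective x →
      ∀ V : (Fin n → ℂ) → ℝ, Continuous V → (∀ v, 0 ≤ V v) →
      ∀ φ : ℝ → ℝ, ContinuousOn φ (Set.Ici 0) → MonotoneOn φ (Set.Ici 0) →
        (∀ t ∈ Set.Ici (0 : ℝ), 0 ≤ φ t) → Tendsto φ atTop atTop →
      ∀ μ : ℝ, 0 < μ →
      ∃ c₀ : X → ℂ, Summable (fun t => ‖c₀ t‖) ∧
        (∀ t, c₀ t ≠ 0 → ∃ i, t = x i) ∧
        ∀ c : X → ℂ, Summable (fun t => ‖c t‖) →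
          V (fun i => PhiMap K c₀ (x i)) + μ * φ (∑' t, ‖c₀ t‖) ≤
            V (fun i => PhiMap K c (x i)) + μ * φ (∑' t, ‖c t‖) := by
  classical
  intro n x hx V hVc hV0 φ hφc hφm hφ0 hφtop μ hμ
  set A : Matrix (Fin n) (Fin n) ℂ := kernelMatrix K x with hAdef
  have hdet : IsUnit A.det := hA1 n x hx
  set g : (Fin n → ℂ) → ℝ := fun y => l1norm (A⁻¹ *ᵥ y) with hgdef
  have hg0 : ∀ y, 0 ≤ g y := fun y =>
    Finset.sum_nonneg fun j _ => norm_nonneg _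
  have hgcont : Continuous g := continuous_l1norm.comp (continuous_mulVec' A⁻¹)
  set F : (Fin n → ℂ) → ℝ := fun y => V y + μ * φ (g y) with hFdef
  have hFcont : Continuous F :=
    hVc.add (continuous_const.mul (hφc.comp_continuous hgcont hg0))
  -- choose radius R
  obtain ⟨R₀, hR₀⟩ := eventually_atTop.mp (tendsto_atTop.mp hφtop (F 0 / μ))
  set R : ℝ := max R₀ 0 with hRdef
  have hR0 : (0 : ℝ) ≤ R := le_max_right _ _
  -- the compact set S
  set B : Set (Fin n → ℂ) := {v | l1norm v ≤ R} with hBdef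
  have hBsub : B ⊆ Metric.closedBall 0 R := by
    intro v hv
    rw [Metric.mem_closedBall, dist_zero_right]
    rw [pi_norm_le_iff_of_nonneg hR0]
    intro i
    calc ‖v i‖ = ‖v i‖ := rfl
      _ ≤ ∑ j, ‖v j‖ :=
        Finset.single_le_sum (fun j _ => norm_nonneg _) (Finset.mem_univ i)
      _ ≤ R := hv
  have hBcompact : IsCompact B :=
    (isCompact_closedBall 0 R).of_isClosed_subset
      (isClosed_le continuous_l1norm continuous_const) hBsub
  set S : Set (Fin n → ℂ) := (fun v => A *ᵥ v) '' B with hSdef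
  have hScompact : IsCompact S := hBcompact.image (continuous_mulVec' A)
  have h0S : (0 : Fin n → ℂ) ∈ S := by
    refine ⟨0, ?_, Matrix.mulVec_zero A⟩
    simp [hBdef, l1norm, hR0]
  obtain ⟨y₀, hy₀S, hy₀min⟩ := hScompact.exists_isMinOn ⟨0, h0S⟩ hFcont.continuousOn
  have hmin := isMinOn_iff.mp hy₀min
  -- global minimality
  have hglob : ∀ y, F y₀ ≤ F y := by
    intro y
    by_cases h : g y ≤ R
    · exact hmin y ⟨A⁻¹ *ᵥ y, h, by
        show A *ᵥ (A⁻¹ *ᵥ y) = y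
        rw [Matrix.mulVec_mulVec, Matrix.mul_nonsing_inv _ hdet, Matrix.one_mulVec]⟩
    · push_neg at h
      have h1 : F 0 / μ ≤ φ (g y) := hR₀ (g y) (((le_max_left _ _).trans h.le))
      have h2 : F 0 ≤ μ * φ (g y) := by
        rw [div_le_iff₀ hμ] at h1; linarith [h1]
      calc F y₀ ≤ F 0 := hmin 0 h0S
        _ ≤ μ * φ (g y) := h2
        _ ≤ F y := le_add_of_nonneg_left (hV0 y)
  -- construct c₀
  set a : Fin n → ℂ := A⁻¹ *ᵥ y₀ with hadef
  have hAa : A *ᵥ a = y₀ := by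
    rw [hadef, Matrix.mulVec_mulVec, Matrix.mul_nonsing_inv _ hdet, Matrix.one_mulVec]
  set c₀ : X → ℂ := fun t => ∑ i, if x i = t then a i else 0 with hc₀def
  have hc₀x : ∀ j, c₀ (x j) = a j := by
    intro j
    show (∑ i, if x i = x j then a i else 0) = a j
    rw [Finset.sum_eq_single_of_mem j (Finset.mem_univ j)
      (fun b _ hb => if_neg fun h => hb (hx h)), if_pos rfl]
  have hc₀zero : ∀ t, t ∉ Finset.image x Finset.univ → c₀ t = 0 := by
    intro t ht
    rw [hc₀def]
    apply Finset.sum_eq_zero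
    intro i _
    rw [if_neg]
    intro h
    exact ht (Finset.mem_image.mpr ⟨i, Finset.mem_univ i, h⟩)
  have hsupp : ∀ t, c₀ t ≠ 0 → ∃ i, t = x i := by
    intro t ht
    by_contra hcon
    push_neg at hcon
    exact ht (hc₀zero t (by
      intro h
      obtain ⟨i, _, hi⟩ := Finset.mem_image.mp h
      exact hcon i hi.symm))
  have hsum : Summable (fun t => ‖c₀ t‖) :=
    summable_of_ne_finset_zero (s := Finset.image x Finset.univ)
      (fun t ht => by rw [hc₀zero t ht, norm_zero])
  have htsum : ∑' t, ‖c₀ t‖ = l1norm a := by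
    rw [tsum_eq_sum (s := Finset.image x Finset.univ)
      (fun t ht => by rw [hc₀zero t ht, norm_zero]),
      Finset.sum_image (fun i _ j _ h => hx h)]
    exact Finset.sum_congr rfl fun i _ => by rw [hc₀x i]
  have hPhi : (fun i => PhiMap K c₀ (x i)) = y₀ := by
    funext j
    rw [show PhiMap K c₀ (x j) = ∑' t, c₀ t * K t (x j) from rfl,
      tsum_eq_sum (s := Finset.image x Finset.univ)
        (fun t ht => by rw [hc₀zero t ht, zero_mul]),
      Finset.sum_image (fun i _ j' _ h => hx h)]
    have : ∑ i, c₀ (x i) * K (x i) (x j) = (A *ᵥ a) j := by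
      rw [Matrix.mulVec]
      simp only [dotProduct, hAdef, kernelMatrix, Matrix.of_apply]
      exact Finset.sum_congr rfl fun i _ => by rw [hc₀x i, mul_comm]
    rw [this, hAa]
  refine ⟨c₀, hsum, hsupp, ?_⟩
  intro c hc
  have hy : l1norm (A⁻¹ *ᵥ (fun i => PhiMap K c (x i))) ≤ ∑' t, ‖c t‖ :=
    hmni n x hx (fun i => PhiMap K c (x i)) c hc (fun i => rfl)
  have key : F y₀ ≤ F (fun i => PhiMap K c (x i)) := hglob _
  have hga : g y₀ = l1norm a := rfl
  have hmono : φ (g (fun i => PhiMap K c (x i))) ≤ φ (∑' t, ‖c t‖) :=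
    hφm (hg0 _) (le_trans (hg0 _) hy) hy
  calc V (fun i => PhiMap K c₀ (x i)) + μ * φ (∑' t, ‖c₀ t‖)
      = V y₀ + μ * φ (l1norm a) := by rw [hPhi, htsum]
    _ = F y₀ := by rw [hFdef]
    _ ≤ F (fun i => PhiMap K c (x i)) := key
    _ ≤ V (fun i => PhiMap K c (x i)) + μ * φ (∑' t, ‖c t‖) := by
        exact add_le_add le_rfl (mul_le_mul_of_nonneg_left hmono hμ.le)
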